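/- arXiv:0912.4411 — 2 statements merged into one kernel-verified Lean document; each statement's English description precedes it below -/
import Mathlib

section
/- For every positive integer n, the number of partitions μ different from the staircase partition δ_n with |μ| = |δ_n| and |μ ∩ δ_n| = |δ_n| − 1 (i.e., partitions obtained from δ_n by first deleting one box and then adding one box in a different position) is exactly n(n−1). -/
/-- A partition: a weakly decreasing finitely supported sequence of naturals. -/
def IsPartition (f : ℕ →₀ ℕ) : Prop := ∀ ⦃i j : ℕ⦄, i ≤ j → f j ≤ f i

/-- The size `|λ|` of a partition: the sum of its parts. -/
noncomputable def psize (f : ℕ →₀ ℕ) : ℕ := f.sum fun _ n => n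

/-- The intersection of two partitions: pointwise minimum. -/
noncomputable def pinter (f g : ℕ →₀ ℕ) : ℕ →₀ ℕ := Finsupp.zipWith min (min_self 0) f g

/-- Two partitions differ by one box: they are distinct and
`|λ ∩ μ| = max(|λ|,|μ|) − 1`. -/
noncomputable def DifferByOneBox (f g : ℕ →₀ ℕ) : Prop :=
  f ≠ g ∧ psize (pinter f g) + 1 = max (psize f) (psize g)

/-- The staircase partition `δ_n = (n, n−1, …, 2, 1)` (0-indexed). -/
noncomputable def staircase (n : ℕ) : ℕ →₀ ℕ :=
  Finsupp.onFinset (Finset.range n) (fun i => n - i)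
    (fun a ha => Finset.mem_range.mpr (Nat.lt_of_sub_ne_zero ha))

/- ############ Auxiliary material ############ -/

lemma staircase_apply (n k : ℕ) : staircase n k = n - k := rfl

lemma pinter_apply (f g : ℕ →₀ ℕ) (k : ℕ) : pinter f g k = min (f k) (g k) := rfl

/-- The partition obtained from the staircase by removing a box in row `i`
and adding a box in row `j`. -/
noncomputable def mv (n i j : ℕ) : ℕ →₀ ℕ :=
  staircase n + Finsupp.single j 1 - Finsupp.single i 1

lemma mv_apply (n i j k : ℕ) :
    mv n i j k = (n - k) + (if j = k then 1 else 0) - (if i = k then 1 else 0) := by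
  rw [mv, Finsupp.tsub_apply, Finsupp.add_apply, Finsupp.single_apply, Finsupp.single_apply]
  rfl

lemma psize_eq_sum {f : ℕ →₀ ℕ} {s : Finset ℕ} (h : f.support ⊆ s) :
    psize f = ∑ k ∈ s, f k :=
  Finsupp.sum_of_support_subset f h _ (fun _ _ => rfl)

lemma sum_eq_one_helper {s : Finset ℕ} {f : ℕ → ℕ} (h : ∑ k ∈ s, f k = 1) :
    ∃ i ∈ s, f i = 1 ∧ ∀ k ∈ s, k ≠ i → f k = 0 := by
  by_cases hex : ∃ i ∈ s, f i ≠ 0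
  · obtain ⟨i, his, hfi⟩ := hex
    have h2 : ∑ k ∈ s.erase i, f k + f i = 1 := by
      rw [Finset.sum_erase_add s f his]; exact h
    have h3 : ∑ k ∈ s.erase i, f k = 0 := by omega
    refine ⟨i, his, by omega, fun k hk hki => ?_⟩
    exact (Finset.sum_eq_zero_iff).mp h3 k (Finset.mem_erase.mpr ⟨hki, hk⟩)
  · push_neg at hex
    rw [Finset.sum_eq_zero hex] at h
    omega

/-- The set of valid positions (i, j): remove a box in row i, add in row j. -/
def pairs (n : ℕ) : Finset (ℕ × ℕ) :=
  (Finset.range n ×ˢ Finset.range (n + 1)).filter fun p => p.2 ≠ p.1 ∧ p.2 ≠ p.1 + 1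

lemma mem_pairs {n i j : ℕ} :
    (i, j) ∈ pairs n ↔ i < n ∧ j ≤ n ∧ j ≠ i ∧ j ≠ i + 1 := by
  simp [pairs, Nat.lt_succ_iff, and_assoc]

lemma card_pairs (n : ℕ) : (pairs n).card = n * (n - 1) := by
  classical
  have hrw : pairs n = (Finset.range n).biUnion
      (fun i => ((Finset.range (n + 1)).filter fun j => j ≠ i ∧ j ≠ i + 1).image
        fun j => (i, j)) := by
    ext ⟨a, b⟩
    simp only [Finset.mem_biUnion, Finset.mem_image, Finset.mem_filter, Finset.mem_range,
      mem_pairs, Prod.mk.injEq, Nat.lt_succ_iff]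
    constructor
    · rintro ⟨h1, h2, h3, h4⟩
      exact ⟨a, h1, b, ⟨h2, h3, h4⟩, rfl, rfl⟩
    · rintro ⟨i, hi, j, ⟨hj1, hj2, hj3⟩, rfl, rfl⟩
      exact ⟨hi, hj1, hj2, hj3⟩
  rw [hrw, Finset.card_biUnion]
  · have hcard : ∀ i ∈ Finset.range n,
        (((Finset.range (n + 1)).filter fun j => j ≠ i ∧ j ≠ i + 1).image
          fun j => (i, j)).card = n - 1 := by
      intro i hi
      rw [Finset.mem_range] at hi
      rw [Finset.card_image_of_injective _ (fun a b h => by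
        injection h with h1 h2)]
      have heq : (Finset.range (n + 1)).filter (fun j => j ≠ i ∧ j ≠ i + 1)
          = Finset.range (n + 1) \ {i, i + 1} := by
        ext k
        simp only [Finset.mem_filter, Finset.mem_sdiff, Finset.mem_insert,
          Finset.mem_singleton, Finset.mem_range]
        tauto
      have hsub : ({i, i + 1} : Finset ℕ) ⊆ Finset.range (n + 1) := by
        intro k hk
        simp only [Finset.mem_insert, Finset.mem_singleton] at hk
        rw [Finset.mem_range]; omega
      rw [heq, Finset.card_sdiff_of_subset hsub, Finset.card_range, Finset.card_pair (by omega)]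
      omega
    rw [Finset.sum_congr rfl hcard, Finset.sum_const, Finset.card_range, smul_eq_mul]
  · intro i _ i' _ hne
    rw [Function.onFun, Finset.disjoint_left]
    rintro ⟨a, b⟩ ha hb
    simp only [Finset.mem_image, Finset.mem_filter] at ha hb
    obtain ⟨x, _, hx⟩ := ha
    obtain ⟨y, _, hy⟩ := hb
    exact hne (congrArg Prod.fst (hx.trans hy.symm))

lemma mv_backward (n i j : ℕ) (hi : i < n) (hj : j ≤ n) (hji : j ≠ i) (hj1 : j ≠ i + 1) :
    IsPartition (mv n i j) ∧ mv n i j ≠ staircase n ∧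
    psize (mv n i j) = psize (staircase n) ∧
    psize (pinter (mv n i j) (staircase n)) + 1 = psize (staircase n) := by
  classical
  have hsδ : (staircase n).support ⊆ Finset.range (n + 1) := by
    intro k hk
    rw [Finsupp.mem_support_iff, staircase_apply] at hk
    rw [Finset.mem_range]; omega
  have hsμ : (mv n i j).support ⊆ Finset.range (n + 1) := by
    intro k hk
    rw [Finsupp.mem_support_iff, mv_apply] at hk
    rw [Finset.mem_range]
    split_ifs at hk <;> omega
  have hsm : (pinter (mv n i j) (staircase n)).support ⊆ Finset.range (n + 1) := by
    intro k hk
    apply hsδ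
    rw [Finsupp.mem_support_iff, pinter_apply] at hk
    rw [Finsupp.mem_support_iff]
    omega
  have e1 := psize_eq_sum hsμ
  have e2 := psize_eq_sum hsδ
  have e3 := psize_eq_sum hsm
  have hiR : i ∈ Finset.range (n + 1) := Finset.mem_range.mpr (by omega)
  have hjR : j ∈ Finset.range (n + 1) := Finset.mem_range.mpr (by omega)
  refine ⟨?_, ?_, ?_, ?_⟩
  · -- IsPartition
    have hadj : ∀ k, mv n i j (k + 1) ≤ mv n i j k := by
      intro k
      rw [mv_apply, mv_apply]
      split_ifs <;> omega
    intro a b hab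
    exact antitone_nat_of_succ_le hadj hab
  · -- ≠ staircase
    intro h
    have := DFunLike.congr_fun h i
    rw [mv_apply, staircase_apply] at this
    split_ifs at this <;> omega
  · -- psize equal
    have key : ∀ k ∈ Finset.range (n + 1),
        mv n i j k + (if i = k then 1 else 0)
          = staircase n k + (if j = k then 1 else 0) := by
      intro k _
      rw [mv_apply, staircase_apply]
      split_ifs <;> omega
    have s1 := Finset.sum_congr rfl key
    rw [Finset.sum_add_distrib, Finset.sum_add_distrib, Finset.sum_ite_eq,
      Finset.sum_ite_eq, if_pos hiR, if_pos hjR] at s1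
    rw [e1, e2]
    exact Nat.add_right_cancel s1
  · -- pinter size
    have key : ∀ k ∈ Finset.range (n + 1),
        pinter (mv n i j) (staircase n) k + (if i = k then 1 else 0)
          = staircase n k := by
      intro k _
      rw [pinter_apply, mv_apply, staircase_apply]
      split_ifs <;> omega
    have s1 := Finset.sum_congr rfl key
    rw [Finset.sum_add_distrib, Finset.sum_ite_eq, if_pos hiR] at s1
    rw [e3, e2]
    exact s1

lemma mv_forward (n : ℕ) (μ : ℕ →₀ ℕ) (h1 : IsPartition μ) (h2 : μ ≠ staircase n)
    (h3 : psize μ = psize (staircase n))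
    (h4 : psize (pinter μ (staircase n)) + 1 = psize (staircase n)) :
    ∃ i j, i < n ∧ j ≤ n ∧ j ≠ i ∧ j ≠ i + 1 ∧ μ = mv n i j := by
  classical
  set δ := staircase n with hδdef
  set m := pinter μ δ with hmdef
  set T := μ.support ∪ δ.support with hT
  have hmk : ∀ k, m k = min (μ k) (n - k) := fun k => rfl
  have hδk : ∀ k, δ k = n - k := fun k => rfl
  have hμT : μ.support ⊆ T := Finset.subset_union_left
  have hδT : δ.support ⊆ T := Finset.subset_union_right
  have hmT : m.support ⊆ T := by
    intro k hk
    apply hμT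
    rw [Finsupp.mem_support_iff] at hk ⊢
    rw [hmk] at hk
    omega
  have eμ := psize_eq_sum hμT
  have eδ := psize_eq_sum hδT
  have em := psize_eq_sum hmT
  have hout : ∀ k, k ∉ T → μ k = 0 ∧ δ k = 0 := by
    intro k hk
    constructor
    · rw [← Finsupp.notMem_support_iff]; exact fun hc => hk (hμT hc)
    · rw [← Finsupp.notMem_support_iff]; exact fun hc => hk (hδT hc)
  have d1 : ∑ k ∈ T, δ k = ∑ k ∈ T, m k + ∑ k ∈ T, (δ k - m k) := by
    rw [← Finset.sum_add_distrib]
    refine Finset.sum_congr rfl fun k _ => ?_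
    rw [hmk, hδk]; omega
  have d2 : ∑ k ∈ T, μ k = ∑ k ∈ T, m k + ∑ k ∈ T, (μ k - m k) := by
    rw [← Finset.sum_add_distrib]
    refine Finset.sum_congr rfl fun k _ => ?_
    rw [hmk]; omega
  have s1 : ∑ k ∈ T, (δ k - m k) = 1 := by omega
  have s2 : ∑ k ∈ T, (μ k - m k) = 1 := by omega
  obtain ⟨i, hiT, hi1, hi0⟩ := sum_eq_one_helper s1
  obtain ⟨j, hjT, hj1, hj0⟩ := sum_eq_one_helper s2
  have Hδ : ∀ k, δ k = m k + (if i = k then 1 else 0) := by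
    intro k
    by_cases hk : k ∈ T
    · by_cases hik : i = k
      · subst hik
        rw [if_pos rfl, hδk]
        rw [hδk] at hi1
        have hc := hmk i
        omega
      · rw [if_neg hik]
        have h0 := hi0 k hk (fun h => hik h.symm)
        have hc := hmk k
        rw [hδk] at h0 ⊢
        omega
    · obtain ⟨hμ0, hδ0⟩ := hout k hk
      have hik : i ≠ k := fun h => hk (h ▸ hiT)
      rw [if_neg hik]
      have hc := hmk k
      rw [hδk] at hδ0 ⊢
      omega
  have Hμ : ∀ k, μ k = m k + (if j = k then 1 else 0) := by
    intro k
    by_cases hk : k ∈ T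
    · by_cases hjk : j = k
      · subst hjk
        rw [if_pos rfl]
        have hc := hmk j
        omega
      · rw [if_neg hjk]
        have h0 := hj0 k hk (fun h => hjk h.symm)
        have hc := hmk k
        omega
    · obtain ⟨hμ0, hδ0⟩ := hout k hk
      have hjk : j ≠ k := fun h => hk (h ▸ hjT)
      rw [if_neg hjk]
      have hc := hmk k
      rw [hδk] at hδ0
      omega
  have hij : j ≠ i := by
    intro h
    subst h
    have a := Hδ j
    have b := Hμ j
    rw [if_pos rfl] at a b
    have hc := hmk j
    rw [hδk] at a
    omega
  have hi_lt : i < n := by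
    have a := Hδ i
    rw [if_pos rfl, hδk] at a
    omega
  have hμi : μ i = (n - i) - 1 := by
    have a := Hδ i
    have b := Hμ i
    rw [if_pos rfl, hδk] at a
    rw [if_neg hij] at b
    omega
  have hμj : μ j = (n - j) + 1 := by
    have a := Hδ j
    have b := Hμ j
    rw [if_pos rfl] at b
    rw [if_neg (fun h : i = j => hij h.symm), hδk] at a
    omega
  have hjn : j ≤ n := by
    by_contra hc
    push_neg at hc
    have hμn : μ n = 0 := by
      have a := Hμ n
      have b := Hδ n
      rw [if_neg (by omega : j ≠ n)] at a
      rw [if_neg (by omega : i ≠ n), hδk] at b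
      omega
    have := h1 (by omega : n ≤ j)
    omega
  have hjsucc : j ≠ i + 1 := by
    intro h
    subst h
    have hle := h1 (show i ≤ i + 1 by omega)
    omega
  refine ⟨i, j, hi_lt, hjn, hij, hjsucc, ?_⟩
  ext k
  rw [mv_apply]
  have a := Hμ k
  have b := Hδ k
  have c := hmk k
  rw [hδk] at b
  split_ifs at a b ⊢ <;> omega

/-- the number of partitions `μ ≠ δ_n` with `|μ| = |δ_n|` and
`|μ ∩ δ_n| = |δ_n| − 1` is exactly `n(n−1)`. -/
theorem staircase_move_one_box_count (n : ℕ) (hn : 0 < n) :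
    {μ : ℕ →₀ ℕ | IsPartition μ ∧ μ ≠ staircase n ∧ psize μ = psize (staircase n) ∧
      psize (pinter μ (staircase n)) + 1 = psize (staircase n)}.ncard = n * (n - 1) := by
  classical
  have hset : {μ : ℕ →₀ ℕ | IsPartition μ ∧ μ ≠ staircase n ∧ psize μ = psize (staircase n) ∧
      psize (pinter μ (staircase n)) + 1 = psize (staircase n)}
      = ↑((pairs n).image fun p => mv n p.1 p.2) := by
    ext μ
    simp only [Set.mem_setOf_eq, Finset.coe_image, Set.mem_image, Finset.mem_coe]
    constructor
    · rintro ⟨h1, h2, h3, h4⟩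
      obtain ⟨i, j, hi, hj, hji, hj1, hμ⟩ := mv_forward n μ h1 h2 h3 h4
      exact ⟨(i, j), mem_pairs.mpr ⟨hi, hj, hji, hj1⟩, hμ.symm⟩
    · rintro ⟨⟨i, j⟩, hp, rfl⟩
      obtain ⟨hi, hj, hji, hj1⟩ := mem_pairs.mp hp
      exact mv_backward n i j hi hj hji hj1
  rw [hset, Set.ncard_coe_finset]
  rw [Finset.card_image_of_injOn, card_pairs]
  rintro ⟨i, j⟩ hp ⟨i', j'⟩ hq h
  simp only [Finset.mem_coe, mem_pairs] at hp hq
  obtain ⟨hp1, hp2, hp3, hp4⟩ := hp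
  obtain ⟨hq1, hq2, hq3, hq4⟩ := hq
  have e1 := DFunLike.congr_fun h i
  have e2 := DFunLike.congr_fun h j
  rw [mv_apply, mv_apply] at e1 e2
  have hii : i' = i := by
    by_contra hne
    split_ifs at e1 <;> omega
  subst hii
  have hjj : j' = j := by
    by_contra hne
    split_ifs at e2 <;> omega
  subst hjj
  rfl
end

section
/- If two distinct partitions ν¹ and ν² differ by one box, then for every partition α the partitions ν¹ + α and ν² + α differ by one box, and the partitions ν¹ ∪ α and ν² ∪ α differ by one box. -/
/-- The multiset of (positive) parts of a partition. -/
def parts (f : ℕ →₀ ℕ) : Multiset ℕ := f.support.val.map f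

/-- The union `λ ∪ μ` of two partitions: sort the combined multiset of parts
into weakly decreasing order. -/
noncomputable def punion (f g : ℕ →₀ ℕ) : ℕ →₀ ℕ :=
  Finsupp.onFinset (Finset.range (parts f + parts g).card)
    (fun i => ((parts f + parts g).sort (· ≤ ·)).reverse.getD i 0)
    (fun i hi => by
      rw [Finset.mem_range]
      by_contra h
      push_neg at h
      exact hi (List.getD_eq_default _ _ (by simpa using h)))

/-! ### Auxiliary lemmas -/

lemma sorted_getD_iff (l : List ℕ) (hs : l.Pairwise (· ≥ ·)) {t : ℕ} (ht : 0 < t) (i : ℕ) :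
    t ≤ l.getD i 0 ↔ i < (l.filter (fun x => t ≤ x)).length := by
  have hfl := List.length_filter_le (fun x => decide (t ≤ x)) l
  by_cases hi : i < l.length
  · rw [List.getD_eq_getElem l 0 hi]
    constructor
    · intro h
      have h2 : (l.take (i+1)).length = i+1 := by rw [List.length_take]; omega
      have hall : (l.take (i+1)).filter (fun x => t ≤ x) = l.take (i+1) := by
        rw [List.filter_eq_self]
        intro x hx
        obtain ⟨j, hj, rfl⟩ := List.mem_iff_getElem.mp hx
        rw [List.getElem_take]
        have hj' : j < l.length := by omega
        have : l[i] ≤ l[j] :=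
          hs.rel_get_of_le (a := ⟨j, hj'⟩) (b := ⟨i, hi⟩) (by simp [Fin.le_def]; omega)
        simp only [decide_eq_true_eq]
        omega
      have hsplit : i + 1 ≤ (l.filter (fun x => t ≤ x)).length := by
        conv_lhs => rw [← h2, ← hall]
        have : l = l.take (i+1) ++ l.drop (i+1) := (List.take_append_drop _ _).symm
        conv_rhs => rw [this]
        rw [List.filter_append, List.length_append]
        omega
      omega
    · intro h
      by_contra hlt
      push_neg at hlt
      have hdrop : (l.drop i).filter (fun x => t ≤ x) = [] := by
        rw [List.filter_eq_nil_iff]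
        intro x hx
        obtain ⟨j, hj, rfl⟩ := List.mem_iff_getElem.mp hx
        rw [List.getElem_drop]
        have hij : i + j < l.length := by
          have := List.length_drop (i := i) (l := l)
          omega
        have : l[i+j] ≤ l[i] :=
          hs.rel_get_of_le (a := ⟨i, hi⟩) (b := ⟨i+j, hij⟩) (by simp [Fin.le_def])
        simp only [decide_eq_true_eq]
        omega
      have htk := List.length_filter_le (fun x => decide (t ≤ x)) (l.take i)
      have h2 : (l.take i).length = i := by rw [List.length_take]; omega
      have : (l.filter (fun x => t ≤ x)).length ≤ i := by
        have hsp : l = l.take i ++ l.drop i := (List.take_append_drop _ _).symm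
        conv_lhs => rw [hsp]
        rw [List.filter_append, hdrop, List.length_append]
        simp only [List.length_nil]
        omega
      omega
  · push_neg at hi
    rw [List.getD_eq_default _ _ hi]
    constructor
    · omega
    · omega

lemma sort_reverse_sorted (M : Multiset ℕ) :
    ((Multiset.sort M (· ≤ ·)).reverse).Pairwise (· ≥ ·) := by
  rw [List.pairwise_reverse]
  exact Multiset.pairwise_sort M (· ≤ ·)

lemma filter_length_sort (M : Multiset ℕ) (p : ℕ → Prop) [DecidablePred p] :
    ((Multiset.sort M (· ≤ ·)).filter (fun x => decide (p x))).length = Multiset.card (M.filter p) := by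
  rw [← Multiset.countP_eq_card_filter, ← List.countP_eq_length_filter]
  conv_rhs => rw [← Multiset.sort_eq M (· ≤ ·)]
  rfl

lemma list_sum_range_getD (l : List ℕ) :
    ∑ i ∈ Finset.range l.length, l.getD i 0 = l.sum := by
  induction l with
  | nil => simp
  | cons a l ih =>
    rw [List.length_cons, Finset.sum_range_succ']
    simp only [List.getD_cons_succ, List.getD_cons_zero, List.sum_cons]
    rw [ih]; omega

lemma psize_add (f g : ℕ →₀ ℕ) : psize (f + g) = psize f + psize g := by
  unfold psize
  exact Finsupp.sum_add_index' (fun _ => rfl) (fun _ _ _ => rfl)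

lemma psize_eq_sum_support (f : ℕ →₀ ℕ) : psize f = ∑ i ∈ f.support, f i := rfl

lemma psize_eq_sum_parts (f : ℕ →₀ ℕ) : psize f = (parts f).sum := by
  rw [psize_eq_sum_support, parts, Finset.sum]

lemma punion_apply (f g : ℕ →₀ ℕ) (i : ℕ) :
    punion f g i = ((parts f + parts g).sort (· ≤ ·)).reverse.getD i 0 := by
  rw [punion, Finsupp.onFinset_apply]

lemma psize_punion (f g : ℕ →₀ ℕ) : psize (punion f g) = psize f + psize g := by
  set M := parts f + parts g with hM
  set l := (M.sort (· ≤ ·)).reverse with hl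
  have hlen : l.length = M.card := by rw [hl, List.length_reverse, Multiset.length_sort]
  have hsub : (punion f g).support ⊆ Finset.range M.card := Finsupp.support_onFinset_subset
  have h1 : psize (punion f g) = ∑ i ∈ Finset.range M.card, punion f g i := by
    rw [psize_eq_sum_support]
    exact Finset.sum_subset hsub (fun x _ hx => Finsupp.notMem_support_iff.mp hx)
  rw [h1]
  have h2 : ∀ i, punion f g i = l.getD i 0 := fun i => punion_apply f g i
  calc ∑ i ∈ Finset.range M.card, punion f g i
      = ∑ i ∈ Finset.range l.length, l.getD i 0 := by
        rw [hlen]; exact Finset.sum_congr rfl (fun i _ => h2 i)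
    _ = l.sum := list_sum_range_getD l
    _ = (M.sort (· ≤ ·)).sum := by rw [hl, List.sum_reverse]
    _ = M.sum := by
        conv_rhs => rw [← Multiset.sort_eq M (· ≤ ·)]
        exact (Multiset.sum_coe _).symm
    _ = psize f + psize g := by
        rw [hM, Multiset.sum_add, psize_eq_sum_parts, psize_eq_sum_parts]

lemma le_punion_iff (f g : ℕ →₀ ℕ) {t : ℕ} (ht : 0 < t) (i : ℕ) :
    t ≤ punion f g i ↔
      i < Multiset.card ((parts f).filter (fun x => t ≤ x)) +
          Multiset.card ((parts g).filter (fun x => t ≤ x)) := by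
  rw [punion_apply,
    sorted_getD_iff _ (sort_reverse_sorted (parts f + parts g)) ht i,
    List.filter_reverse, List.length_reverse,
    filter_length_sort (parts f + parts g) (fun x => t ≤ x),
    Multiset.filter_add, Multiset.card_add]

lemma downward_closed_eq_range (S : Finset ℕ) (h : ∀ j ∈ S, ∀ k, k ≤ j → k ∈ S) :
    S = Finset.range S.card := by
  rcases S.eq_empty_or_nonempty with rfl | hS
  · simp
  · have hm := S.max'_mem hS
    have hR : S = Finset.range (S.max' hS + 1) := by
      ext j
      simp only [Finset.mem_range, Nat.lt_succ_iff]
      exact ⟨fun hj => S.le_max' j hj, fun hj => h _ hm _ hj⟩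
    rw [hR, Finset.card_range]

/-- The set of rows with part at least `t`. -/
def nge (t : ℕ) (f : ℕ →₀ ℕ) : Finset ℕ := f.support.filter (fun j => t ≤ f j)

lemma mem_nge {t : ℕ} (ht : 0 < t) (f : ℕ →₀ ℕ) (j : ℕ) : j ∈ nge t f ↔ t ≤ f j := by
  simp only [nge, Finset.mem_filter, Finsupp.mem_support_iff]
  exact ⟨fun h => h.2, fun h => ⟨by omega, h⟩⟩

lemma card_filter_parts (f : ℕ →₀ ℕ) {t : ℕ} (ht : 0 < t) :
    Multiset.card ((parts f).filter (fun x => t ≤ x)) = (nge t f).card := by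
  rw [parts, ← Multiset.countP_eq_card_filter, Multiset.countP_map]
  rfl

lemma nge_card_pinter (f g : ℕ →₀ ℕ) (hf : IsPartition f) (hg : IsPartition g)
    {t : ℕ} (ht : 0 < t) :
    (nge t (pinter f g)).card = min (nge t f).card (nge t g).card := by
  have h1 : nge t (pinter f g) = nge t f ∩ nge t g := by
    ext j
    rw [Finset.mem_inter, mem_nge ht, mem_nge ht, mem_nge ht, pinter,
      Finsupp.zipWith_apply, le_min_iff]
  have hfr : nge t f = Finset.range (nge t f).card :=
    downward_closed_eq_range _ (fun j hj k hk => by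
      rw [mem_nge ht] at *
      exact le_trans hj (hf hk))
  have hgr : nge t g = Finset.range (nge t g).card :=
    downward_closed_eq_range _ (fun j hj k hk => by
      rw [mem_nge ht] at *
      exact le_trans hj (hg hk))
  rw [h1]
  conv_lhs => rw [hfr, hgr]
  have : Finset.range (nge t f).card ∩ Finset.range (nge t g).card
      = Finset.range (min (nge t f).card (nge t g).card) := by
    ext j; simp [Nat.lt_min]
  rw [this, Finset.card_range]

lemma pinter_punion (f g a : ℕ →₀ ℕ) (hf : IsPartition f) (hg : IsPartition g) :
    pinter (punion f a) (punion g a) = punion (pinter f g) a := by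
  ext i
  have key : ∀ t, 0 < t →
      (t ≤ pinter (punion f a) (punion g a) i ↔ t ≤ punion (pinter f g) a i) := by
    intro t ht
    rw [pinter, Finsupp.zipWith_apply, le_min_iff, le_punion_iff f a ht,
      le_punion_iff g a ht, le_punion_iff (pinter f g) a ht]
    have hc : Multiset.card ((parts (pinter f g)).filter (fun x => t ≤ x))
        = min (Multiset.card ((parts f).filter (fun x => t ≤ x)))
              (Multiset.card ((parts g).filter (fun x => t ≤ x))) := by
      rw [card_filter_parts _ ht, card_filter_parts _ ht, card_filter_parts _ ht]
      exact nge_card_pinter f g hf hg ht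
    rw [hc]
    omega
  apply le_antisymm
  · rcases Nat.eq_zero_or_pos (pinter (punion f a) (punion g a) i) with h | h
    · omega
    · exact (key _ h).mp le_rfl
  · rcases Nat.eq_zero_or_pos (punion (pinter f g) a i) with h | h
    · omega
    · exact (key _ h).mpr le_rfl

lemma pinter_self (f : ℕ →₀ ℕ) : pinter f f = f := by
  ext i; rw [pinter, Finsupp.zipWith_apply, min_self]

/-- if two distinct partitions differ by one box, then so do their
sums and unions with any fixed partition `α`. -/
theorem differByOneBox_add_union (ν₁ ν₂ : ℕ →₀ ℕ) (h₁ : IsPartition ν₁)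
    (h₂ : IsPartition ν₂) (hne : ν₁ ≠ ν₂) (hd : DifferByOneBox ν₁ ν₂)
    (α : ℕ →₀ ℕ) (hα : IsPartition α) :
    DifferByOneBox (ν₁ + α) (ν₂ + α) ∧
    DifferByOneBox (punion ν₁ α) (punion ν₂ α) := by
  obtain ⟨-, hsz⟩ := hd
  constructor
  · have e1 : pinter (ν₁ + α) (ν₂ + α) = pinter ν₁ ν₂ + α := by
      ext i
      simp only [pinter, Finsupp.zipWith_apply, Finsupp.add_apply]
      exact min_add_add_right _ _ _
    have hs : psize (pinter (ν₁ + α) (ν₂ + α)) + 1 = max (psize (ν₁ + α)) (psize (ν₂ + α)) := by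
      rw [e1, psize_add, psize_add, psize_add]
      omega
    refine ⟨fun h => hne (by exact add_right_cancel h), hs⟩
  · have e2 : pinter (punion ν₁ α) (punion ν₂ α) = punion (pinter ν₁ ν₂) α :=
      pinter_punion ν₁ ν₂ α h₁ h₂
    have hs : psize (pinter (punion ν₁ α) (punion ν₂ α)) + 1
        = max (psize (punion ν₁ α)) (psize (punion ν₂ α)) := by
      rw [e2, psize_punion, psize_punion, psize_punion]
      omega
    refine ⟨fun h => ?_, hs⟩
    rw [h, pinter_self] at hs
    omega
end
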